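/- arXiv:2107.11940 — 6 statements merged into one kernel-verified Lean document; each statement's English description precedes it below -/
import Mathlib

section
/- Let (X,Γ) and (Y,Λ) be hyperbolic iterated function systems with attractors 𝔸 and 𝔹, and let (f,α): (X,Γ) → (Y,Λ) be a morphism. Then the attractor of the fibred system (X × Y, Γ ×_α Λ) is the graph gr(f|_𝔸) = {(x, f(x)) : x ∈ 𝔸}. -/
open EMetric Set

private lemma infEdist_image_le_of_lipschitz {X Y : Type*} [PseudoEMetricSpace X]
    [PseudoEMetricSpace Y] {F : X → Y} {K : NNReal} (hF : LipschitzWith K F)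
    {t : Set X} (ht : t.Nonempty) (x : X) :
    infEdist (F x) (F '' t) ≤ (K : ENNReal) * infEdist x t := by
  haveI := ht.to_subtype
  have h1 : infEdist x t = ⨅ y : t, edist x (y : X) := by
    rw [infEdist]; exact (iInf_subtype'' t fun y => edist x y).symm
  rw [h1, ENNReal.mul_iInf (by simp)]
  refine le_iInf fun y => ?_
  exact (infEdist_le_edist_of_mem (mem_image_of_mem F y.2)).trans (hF x y)

private lemma attractor_unique {Z : Type*} [MetricSpace Z] {ι : Type*} [Fintype ι]
    (F : ι → Z → Z) (c : ι → NNReal) (hc : ∀ i, c i < 1) (hF : ∀ i, LipschitzWith (c i) (F i))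
    (D G : Set Z) (hDc : IsCompact D) (hDne : D.Nonempty) (hDinv : D = ⋃ i, F i '' D)
    (hGc : IsCompact G) (hGne : G.Nonempty) (hGinv : G = ⋃ i, F i '' G) : D = G := by
  set C : NNReal := Finset.univ.sup c with hC
  have hC1 : (C : ENNReal) < 1 := by
    rw [show (1 : ENNReal) = ((1 : NNReal) : ENNReal) from rfl, ENNReal.coe_lt_coe]
    exact Finset.sup_lt_iff (by norm_num) |>.2 (fun i _ => hc i)
  have hCi : ∀ i, (c i : ENNReal) ≤ (C : ENNReal) := fun i =>
    ENNReal.coe_le_coe.2 (Finset.le_sup (Finset.mem_univ i))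
  set e := hausdorffEdist D G with he
  have hefin : e ≠ ⊤ :=
    Metric.hausdorffEdist_ne_top_of_nonempty_of_bounded hDne hGne hDc.isBounded hGc.isBounded
  have key : ∀ (S T : Set Z), S.Nonempty → T.Nonempty →
      hausdorffEdist (⋃ i, F i '' S) (⋃ i, F i '' T) ≤ (C : ENNReal) * hausdorffEdist S T := by
    intro S T hS hT
    refine hausdorffEdist_le_of_infEdist ?_ ?_
    · rintro z hz
      simp only [mem_iUnion, mem_image] at hz
      obtain ⟨i, q, hq, rfl⟩ := hz
      calc infEdist (F i q) (⋃ j, F j '' T) ≤ infEdist (F i q) (F i '' T) :=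
            infEdist_anti (subset_iUnion (fun j => F j '' T) i)
        _ ≤ (c i : ENNReal) * infEdist q T := infEdist_image_le_of_lipschitz (hF i) hT q
        _ ≤ (C : ENNReal) * hausdorffEdist S T :=
            mul_le_mul' (hCi i) (infEdist_le_hausdorffEdist_of_mem hq)
    · rintro z hz
      simp only [mem_iUnion, mem_image] at hz
      obtain ⟨i, q, hq, rfl⟩ := hz
      calc infEdist (F i q) (⋃ j, F j '' S) ≤ infEdist (F i q) (F i '' S) :=
            infEdist_anti (subset_iUnion (fun j => F j '' S) i)
        _ ≤ (c i : ENNReal) * infEdist q S := infEdist_image_le_of_lipschitz (hF i) hS q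
        _ ≤ (C : ENNReal) * hausdorffEdist S T := by
            rw [show hausdorffEdist S T = hausdorffEdist T S from hausdorffEdist_comm]
            exact mul_le_mul' (hCi i) (infEdist_le_hausdorffEdist_of_mem hq)
  have hkey : e ≤ (C : ENNReal) * e := by
    calc e = hausdorffEdist (⋃ i, F i '' D) (⋃ i, F i '' G) := by rw [he, ← hDinv, ← hGinv]
      _ ≤ (C : ENNReal) * hausdorffEdist D G := key D G hDne hGne
  have he0 : e = 0 := by
    by_contra h
    have : (C : ENNReal) * e < 1 * e := by
      exact ENNReal.mul_lt_mul_left h hefin hC1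
    rw [one_mul] at this
    exact absurd hkey (not_le.2 this)
  exact hausdorffEdist_zero_iff_eq_of_closed hDc.isClosed hGc.isClosed |>.1 he0

theorem graph_is_attractor_of_fibred_system
    {X Y : Type*} [MetricSpace X] [CompleteSpace X] [MetricSpace Y] [CompleteSpace Y]
    {ι κ : Type*} [Fintype ι] [Fintype κ]
    (γ : ι → X → X) (r : ι → NNReal)
    (hr : ∀ i, r i < 1) (hγ : ∀ i, LipschitzWith (r i) (γ i))
    (lam : κ → Y → Y) (s : κ → NNReal)
    (hs : ∀ j, s j < 1) (hlam : ∀ j, LipschitzWith (s j) (lam j))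
    (A : Set X) (hAc : IsCompact A) (hAne : A.Nonempty) (hAinv : A = ⋃ i, γ i '' A)
    (B : Set Y) (hBc : IsCompact B) (hBne : B.Nonempty) (hBinv : B = ⋃ j, lam j '' B)
    (f : X → Y) (hf : Continuous f) (α : ι → κ)
    (hmor : ∀ i, f ∘ γ i = lam (α i) ∘ f)
    (D : Set (X × Y)) (hDc : IsCompact D) (hDne : D.Nonempty)
    (hDinv : D = ⋃ i, (fun p : X × Y => (γ i p.1, lam (α i) p.2)) '' D) :
    D = {p : X × Y | p.1 ∈ A ∧ p.2 = f p.1} := by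
  set F : ι → X × Y → X × Y := fun i p => (γ i p.1, lam (α i) p.2) with hFdef
  set G : Set (X × Y) := {p : X × Y | p.1 ∈ A ∧ p.2 = f p.1} with hGdef
  have hGeq : G = (fun x => (x, f x)) '' A := by
    ext p
    simp only [hGdef, mem_setOf_eq, mem_image]
    constructor
    · rintro ⟨h1, h2⟩; exact ⟨p.1, h1, by rw [← h2]⟩
    · rintro ⟨x, hx, rfl⟩; exact ⟨hx, rfl⟩
  have hGc : IsCompact G := hGeq ▸ hAc.image (continuous_id.prodMk hf)
  have hGne : G.Nonempty := hGeq ▸ hAne.image _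
  have hGinv : G = ⋃ i, F i '' G := by
    rw [hGeq]
    ext p
    simp only [mem_iUnion, mem_image, hFdef]
    constructor
    · rintro ⟨x, hx, rfl⟩
      rw [hAinv] at hx
      simp only [mem_iUnion, mem_image] at hx
      obtain ⟨i, y, hy, rfl⟩ := hx
      exact ⟨i, (y, f y), ⟨y, hy, rfl⟩, by
        have := congrFun (hmor i) y
        simp only [Function.comp_apply] at this
        simp [this]⟩
    · rintro ⟨i, q, ⟨x, hx, rfl⟩, rfl⟩
      refine ⟨γ i x, ?_, by
        have := congrFun (hmor i) x
        simp only [Function.comp_apply] at this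
        simp [this]⟩
      rw [hAinv]
      exact mem_iUnion.2 ⟨i, mem_image_of_mem _ hx⟩
  refine attractor_unique F (fun i => max (r i) (s (α i)))
    (fun i => max_lt (hr i) (hs (α i)))
    (fun i => ?_) D G hDc hDne hDinv hGc hGne hGinv
  have := ((hγ i).comp LipschitzWith.prod_fst).prodMk ((hlam (α i)).comp LipschitzWith.prod_snd)
  simpa [mul_one] using this
end

section
/- Let (X,Γ) and (Y,Λ) be hyperbolic IFSs with attractors 𝔸 and 𝔹, let β: Γ → Λ, and let 𝔻 be the attractor of the fibred system (X × Y, Γ ×_β Λ). If 𝔻 is the graph of a function g: 𝔸 → 𝔹, then g is continuous and (g,β) is a morphism from (𝔸,Γ) to (𝔹,Λ), i.e. g ∘ γ = β(γ) ∘ g on 𝔸 for all γ ∈ Γ. -/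
theorem graph_attractor_gives_morphism
    {X Y : Type*} [MetricSpace X] [CompleteSpace X] [MetricSpace Y] [CompleteSpace Y]
    {ι κ : Type*} [Fintype ι] [Fintype κ]
    (γ : ι → X → X) (r : ι → NNReal)
    (hr : ∀ i, r i < 1) (hγ : ∀ i, LipschitzWith (r i) (γ i))
    (lam : κ → Y → Y) (s : κ → NNReal)
    (hs : ∀ j, s j < 1) (hlam : ∀ j, LipschitzWith (s j) (lam j))
    (A : Set X) (hAc : IsCompact A) (hAne : A.Nonempty) (hAinv : A = ⋃ i, γ i '' A)
    (B : Set Y) (hBc : IsCompact B) (hBne : B.Nonempty) (hBinv : B = ⋃ j, lam j '' B)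
    (β : ι → κ)
    (D : Set (X × Y)) (hDc : IsCompact D) (hDne : D.Nonempty)
    (hDinv : D = ⋃ i, (fun p : X × Y => (γ i p.1, lam (β i) p.2)) '' D)
    (g : X → Y) (hDgraph : D = (fun x => (x, g x)) '' A) :
    Set.MapsTo g A B ∧ ContinuousOn g A ∧
      ∀ i, ∀ x ∈ A, g (γ i x) = lam (β i) (g x) := by
  -- membership in the graph
  have hmemD : ∀ x ∈ A, (x, g x) ∈ D := by
    intro x hx
    rw [hDgraph]
    exact Set.mem_image_of_mem _ hx
  have hDmem : ∀ p ∈ D, p.1 ∈ A ∧ p.2 = g p.1 := by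
    intro p hp
    rw [hDgraph] at hp
    obtain ⟨x, hx, hxp⟩ := hp
    constructor
    · rw [← hxp]; exact hx
    · rw [← hxp]
  -- B is invariant under each lam (β i)
  have hBstep : ∀ i, ∀ b ∈ B, lam (β i) b ∈ B := by
    intro i b hb
    rw [hBinv]
    exact Set.mem_iUnion.2 ⟨β i, Set.mem_image_of_mem _ hb⟩
  -- second projection of D
  set S : Set Y := Prod.snd '' D with hS
  have hSc : IsCompact S := hDc.image continuous_snd
  have hSne : S.Nonempty := hDne.image _
  have hSinv : S = ⋃ i, lam (β i) '' S := by
    conv_lhs => rw [hS, hDinv]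
    rw [Set.image_iUnion]
    refine Set.iUnion_congr fun i => ?_
    rw [hS, Set.image_image, Set.image_image]
  -- the contraction ratio
  set c : NNReal := Finset.univ.sup (fun i => s (β i)) with hc
  have hc1 : c < 1 := by
    rw [hc, Finset.sup_lt_iff (by norm_num : (⊥ : NNReal) < 1)]
    exact fun i _ => hs (β i)
  have hcle : ∀ i, s (β i) ≤ c := fun i => hc ▸ Finset.le_sup (f := fun i => s (β i)) (Finset.mem_univ i)
  -- S ⊆ B
  have hSB : S ⊆ B := by
    obtain ⟨y0, hy0S, hy0max⟩ :=
      hSc.exists_isMaxOn hSne (Metric.continuous_infDist_pt B).continuousOn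
    set M := Metric.infDist y0 B with hM
    have hMle : M ≤ (c : ℝ) * M := by
      have hy0' := hy0S
      rw [hSinv] at hy0'
      obtain ⟨i, hy0i⟩ := Set.mem_iUnion.1 hy0'
      obtain ⟨y1, hy1S, hy1⟩ := hy0i
      obtain ⟨b, hbB, hbd⟩ := hBc.exists_infDist_eq_dist hBne y1
      calc M = Metric.infDist y0 B := rfl
        _ ≤ dist y0 (lam (β i) b) := Metric.infDist_le_dist_of_mem (hBstep i b hbB)
        _ = dist (lam (β i) y1) (lam (β i) b) := by rw [hy1]
        _ ≤ (s (β i) : ℝ) * dist y1 b := (hlam (β i)).dist_le_mul y1 b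
        _ = (s (β i) : ℝ) * Metric.infDist y1 B := by rw [hbd]
        _ ≤ (c : ℝ) * M := by
            apply mul_le_mul
            · exact_mod_cast hcle i
            · exact hy0max hy1S
            · exact Metric.infDist_nonneg
            · exact c.coe_nonneg
    have hM0 : M ≤ 0 := by
      have hcR : (c : ℝ) < 1 := by exact_mod_cast hc1
      nlinarith [Metric.infDist_nonneg (x := y0) (s := B)]
    intro y hyS
    have h2 : Metric.infDist y B = 0 :=
      le_antisymm (le_trans (hy0max hyS) hM0) Metric.infDist_nonneg
    exact (hBc.isClosed.mem_iff_infDist_zero hBne).2 h2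
  -- MapsTo
  have hmaps : Set.MapsTo g A B := by
    intro x hx
    exact hSB ⟨(x, g x), hmemD x hx, rfl⟩
  refine ⟨hmaps, ?_, ?_⟩
  · -- continuity via compactness of the graph
    haveI : CompactSpace D := isCompact_iff_compactSpace.mp hDc
    have hcontA : ∀ p : D, (p : X × Y).1 ∈ A := fun p => (hDmem p p.2).1
    let e : D ≃ A :=
      { toFun := fun p => ⟨(p : X × Y).1, hcontA p⟩
        invFun := fun a => ⟨(a, g a), hmemD a a.2⟩
        left_inv := by
          rintro ⟨p, hp⟩
          obtain ⟨hp1, hp2⟩ := hDmem p hp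
          simp only [Subtype.mk.injEq]
          exact Prod.ext rfl hp2.symm
        right_inv := fun a => rfl }
    have hecont : Continuous e :=
      Continuous.subtype_mk (continuous_fst.comp continuous_subtype_val) _
    let h : D ≃ₜ A := hecont.homeoOfEquivCompactToT2 (f := e)
    rw [continuousOn_iff_continuous_restrict]
    have : A.domRestrict g = fun a => ((h.symm a : D) : X × Y).2 := by
      funext a
      have : h.symm a = e.symm a := rfl
      rw [this]
      rfl
    rw [this]
    exact continuous_snd.comp (continuous_subtype_val.comp h.symm.continuous)
  · -- equivariance
    intro i x hx
    have h1 : (γ i x, lam (β i) (g x)) ∈ D := by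
      rw [hDinv]
      exact Set.mem_iUnion.2 ⟨i, Set.mem_image_of_mem _ (hmemD x hx)⟩
    exact ((hDmem _ h1).2).symm
end

section
/- Let (𝔸,Γ) and (𝔹,Λ) be hyperbolic iterated function systems whose underlying spaces are their own attractors. For f: 𝔸 → 𝔹 and α: Γ → Λ, the pair (f,α) is a morphism (f continuous and f ∘ γ = α(γ) ∘ f for all γ ∈ Γ) if and only if gr(f) = {(x,f(x)) : x ∈ 𝔸} is the attractor of the fibred system (𝔸 × 𝔹, Γ ×_α Λ). -/
theorem closed_graph_theorem_for_ifs
    {X Y : Type*} [MetricSpace X] [CompactSpace X] [Nonempty X]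
    [MetricSpace Y] [CompactSpace Y]
    {ι κ : Type*} [Fintype ι] [Fintype κ]
    (γ : ι → X → X) (r : ι → NNReal)
    (hr : ∀ i, r i < 1) (hγ : ∀ i, LipschitzWith (r i) (γ i))
    (lam : κ → Y → Y) (s : κ → NNReal)
    (hs : ∀ j, s j < 1) (hlam : ∀ j, LipschitzWith (s j) (lam j))
    (hXattr : (⋃ i, Set.range (γ i)) = Set.univ)
    (hYattr : (⋃ j, Set.range (lam j)) = Set.univ)
    (f : X → Y) (α : ι → κ) :
    (Continuous f ∧ ∀ i, f ∘ γ i = lam (α i) ∘ f) ↔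
      (IsCompact {p : X × Y | p.2 = f p.1} ∧
        {p : X × Y | p.2 = f p.1} =
          ⋃ i, (fun p : X × Y => (γ i p.1, lam (α i) p.2)) ''
            {p : X × Y | p.2 = f p.1}) := by
  set G : Set (X × Y) := {p : X × Y | p.2 = f p.1} with hG
  constructor
  · rintro ⟨hf, hcomm⟩
    have hGr : G = Set.range (fun x => (x, f x)) := by
      ext ⟨x, y⟩
      simp [hG, eq_comm]
    constructor
    · rw [hGr, ← Set.image_univ]
      exact isCompact_univ.image (continuous_id.prodMk hf)
    · apply Set.Subset.antisymm
      · rintro ⟨x, y⟩ hxy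
        have hx : x ∈ ⋃ i, Set.range (γ i) := by rw [hXattr]; trivial
        obtain ⟨_, ⟨i, rfl⟩, x', rfl⟩ := hx
        refine Set.mem_iUnion.2 ⟨i, ⟨(x', f x'), rfl, ?_⟩⟩
        have := congrFun (hcomm i) x'
        simp only [Function.comp] at this
        simp only [hG, Set.mem_setOf_eq] at hxy
        simp [Prod.ext_iff, hxy, this]
      · rintro p hp
        obtain ⟨i, ⟨q, hq, rfl⟩⟩ := Set.mem_iUnion.1 hp
        have := congrFun (hcomm i) q.1
        simp only [Function.comp] at this
        simp only [hG, Set.mem_setOf_eq] at hq ⊢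
        rw [hq]
        exact this.symm
  · rintro ⟨hcomp, hinv⟩
    have hcomm : ∀ i, f ∘ γ i = lam (α i) ∘ f := by
      intro i
      funext x
      have hx : (x, f x) ∈ G := rfl
      have : (γ i x, lam (α i) (f x)) ∈ G := by
        rw [hinv]
        exact Set.mem_iUnion.2 ⟨i, ⟨(x, f x), hx, rfl⟩⟩
      exact (Set.mem_setOf_eq ▸ this).symm
    refine ⟨?_, hcomm⟩
    -- continuity from compact graph
    rw [continuous_iff_seqContinuous]
    intro u x hu
    apply Filter.tendsto_of_subseq_tendsto
    intro ns hns
    have hmem : ∀ n, (u (ns n), f (u (ns n))) ∈ G := fun n => rfl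
    obtain ⟨⟨a, b⟩, hab, φ, hφ, hconv⟩ := hcomp.tendsto_subseq hmem
    have hconv1 : Filter.Tendsto (fun k => u (ns (φ k))) Filter.atTop (nhds a) :=
      (continuous_fst.tendsto _).comp hconv
    have hconv2 : Filter.Tendsto (fun k => f (u (ns (φ k)))) Filter.atTop (nhds b) :=
      (continuous_snd.tendsto _).comp hconv
    have hxa : a = x := by
      have : Filter.Tendsto (fun k => u (ns (φ k))) Filter.atTop (nhds x) :=
        hu.comp (hns.comp hφ.tendsto_atTop)
      exact tendsto_nhds_unique hconv1 this
    have hb : b = f x := by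
      have : b = f a := hab
      rw [this, hxa]
    exact ⟨φ, by rw [← hb]; exact hconv2⟩
end

section
/- Let (X,Γ) and (Y,Λ) be hyperbolic IFSs with attractor 𝔸 of (X,Γ). If (f,α) and (g,α) are two morphisms from (X,Γ) to (Y,Λ) with the same map α: Γ → Λ, then f and g agree on 𝔸. -/
theorem morphism_rigidity
    {X Y : Type*} [MetricSpace X] [CompleteSpace X] [MetricSpace Y] [CompleteSpace Y]
    {ι κ : Type*} [Fintype ι] [Fintype κ]
    (γ : ι → X → X) (r : ι → NNReal)
    (hr : ∀ i, r i < 1) (hγ : ∀ i, LipschitzWith (r i) (γ i))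
    (lam : κ → Y → Y) (s : κ → NNReal)
    (hs : ∀ j, s j < 1) (hlam : ∀ j, LipschitzWith (s j) (lam j))
    (A : Set X) (hAc : IsCompact A) (hAne : A.Nonempty) (hAinv : A = ⋃ i, γ i '' A)
    (f g : X → Y) (hf : Continuous f) (hg : Continuous g) (α : ι → κ)
    (hmorf : ∀ i, f ∘ γ i = lam (α i) ∘ f)
    (hmorg : ∀ i, g ∘ γ i = lam (α i) ∘ g) :
    ∀ x ∈ A, f x = g x := by
  obtain ⟨x₀, hx₀A, hmax⟩ := hAc.exists_isMaxOn hAne ((hf.dist hg).continuousOn)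
  suffices hz : dist (f x₀) (g x₀) ≤ 0 by
    intro x hx
    exact dist_le_zero.mp (le_trans (hmax hx) hz)
  by_contra hpos
  push_neg at hpos
  have hmem : x₀ ∈ ⋃ i, γ i '' A := hAinv ▸ hx₀A
  obtain ⟨i, a, haA, rfl⟩ := by simpa using hmem
  have h1 : f (γ i a) = lam (α i) (f a) := congrFun (hmorf i) a
  have h2 : g (γ i a) = lam (α i) (g a) := congrFun (hmorg i) a
  have key : dist (f (γ i a)) (g (γ i a)) ≤ (s (α i) : ℝ) * dist (f a) (g a) := by
    rw [h1, h2]; exact (hlam (α i)).dist_le_mul _ _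
  have hle : dist (f a) (g a) ≤ dist (f (γ i a)) (g (γ i a)) := hmax haA
  have hs1 : (s (α i) : ℝ) < 1 := hs (α i)
  have hs0 : (0:ℝ) ≤ s (α i) := (s (α i)).coe_nonneg
  nlinarith
end

section
/- Let (𝔸,Γ) and (𝔹,Λ) be hyperbolic IFSs equal to their attractors, with enumerations Γ = {γ₁,…,γ_N}, Λ = {λ₁,…,λ_M}, code maps π_Γ: Ω_N → 𝔸 and π_Λ: Ω_M → 𝔹, and a morphism (f,α): (𝔸,Γ) → (𝔹,Λ). Define h: {1,…,N} → {1,…,M} by α(γ_i) = λ_{h(i)} and let f̃: Ω_N → Ω_M apply h coordinatewise. Then f ∘ π_Γ = π_Λ ∘ f̃. -/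
/-- The prepending map `σ_i : w ↦ iw` on the code space. -/
def prependMap {N : ℕ} (i : Fin N) (w : ℕ → Fin N) : ℕ → Fin N :=
  fun n => Nat.casesOn n i w

theorem morphism_lifts_to_code_spaces
    {X Y : Type*} [MetricSpace X] [CompactSpace X] [MetricSpace Y] [CompactSpace Y]
    {N M : ℕ}
    (γ : Fin N → X → X) (r : Fin N → NNReal)
    (hr : ∀ i, r i < 1) (hγ : ∀ i, LipschitzWith (r i) (γ i))
    (lam : Fin M → Y → Y) (s : Fin M → NNReal)
    (hs : ∀ j, s j < 1) (hlam : ∀ j, LipschitzWith (s j) (lam j))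
    (hXattr : (⋃ i, Set.range (γ i)) = Set.univ)
    (hYattr : (⋃ j, Set.range (lam j)) = Set.univ)
    (πΓ : (ℕ → Fin N) → X) (hπΓc : Continuous πΓ)
    (hπΓ : ∀ (i : Fin N) (w : ℕ → Fin N), πΓ (prependMap i w) = γ i (πΓ w))
    (πΛ : (ℕ → Fin M) → Y) (hπΛc : Continuous πΛ)
    (hπΛ : ∀ (j : Fin M) (w : ℕ → Fin M), πΛ (prependMap j w) = lam j (πΛ w))
    (f : X → Y) (hf : Continuous f) (h : Fin N → Fin M)
    (hmor : ∀ i, f ∘ γ i = lam (h i) ∘ f) :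
    f ∘ πΓ = πΛ ∘ (fun w : ℕ → Fin N => h ∘ w) := by
  funext w
  rcases Nat.eq_zero_or_pos N with hN | hN
  · subst hN; exact (w 0).elim0
  set c : NNReal := Finset.univ.sup s with hc
  have hcs : ∀ j, (s j : ℝ) ≤ c := fun j => by
    exact_mod_cast Finset.le_sup (f := s) (Finset.mem_univ j)
  have hc1 : (c : ℝ) < 1 := by
    have : c < 1 := Finset.sup_lt_iff (by norm_num : (⊥ : NNReal) < 1) |>.mpr
      (fun j _ => hs j)
    exact_mod_cast this
  obtain ⟨C, hC⟩ := Metric.isBounded_iff.mp (isCompact_univ (X := Y)).isBounded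
  have hC0 : 0 ≤ C := by
    have := hC (Set.mem_univ (f (πΓ w))) (Set.mem_univ (f (πΓ w)))
    simpa using this
  have key : ∀ n (w : ℕ → Fin N), dist (f (πΓ w)) (πΛ (h ∘ w)) ≤ C * (c : ℝ) ^ n := by
    intro n
    induction n with
    | zero => intro w; simpa using hC (Set.mem_univ _) (Set.mem_univ _)
    | succ n ih =>
      intro w
      set w' : ℕ → Fin N := fun k => w (k + 1) with hw'
      have hweq : w = prependMap (w 0) w' := by
        funext k; cases k <;> rfl
      have hheq : (h ∘ w) = prependMap (h (w 0)) (h ∘ w') := by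
        funext k; cases k <;> rfl
      have e1 : f (πΓ w) = lam (h (w 0)) (f (πΓ w')) := by
        rw [hweq, hπΓ]
        exact congrFun (hmor (w 0)) (πΓ w')
      have e2 : πΛ (h ∘ w) = lam (h (w 0)) (πΛ (h ∘ w')) := by
        rw [hheq, hπΛ]
      rw [e1, e2]
      calc dist (lam (h (w 0)) (f (πΓ w'))) (lam (h (w 0)) (πΛ (h ∘ w')))
          ≤ (s (h (w 0)) : ℝ) * dist (f (πΓ w')) (πΛ (h ∘ w')) :=
            (hlam (h (w 0))).dist_le_mul _ _
        _ ≤ (c : ℝ) * (C * (c : ℝ) ^ n) := by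
            apply mul_le_mul (hcs _) (ih w') dist_nonneg c.coe_nonneg
        _ = C * (c : ℝ) ^ (n + 1) := by ring
  have hT : Filter.Tendsto (fun n : ℕ => C * (c : ℝ) ^ n) Filter.atTop (nhds 0) := by
    have := tendsto_pow_atTop_nhds_zero_of_lt_one c.coe_nonneg hc1
    simpa using this.const_mul C
  have hle : dist (f (πΓ w)) (πΛ (h ∘ w)) ≤ 0 :=
    ge_of_tendsto' hT (fun n => key n w)
  have : dist (f (πΓ w)) (πΛ (h ∘ w)) = 0 := le_antisymm hle dist_nonneg
  simpa [dist_eq_zero] using this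
end

section
/- Consider the IFSs on [0,1] given by Γ = {γ₁, γ₂} with γ₁(x) = 2x/3, γ₂(x) = 2x/3 + 1/3, and Λ = {λ₁, λ₂} with λ₁(x) = 3x/4, λ₂(x) = 3x/4 + 1/4. Then both systems have attractor [0,1], and there is no homeomorphism f: [0,1] → [0,1] and bijection α: Γ → Λ such that f ∘ γ = α(γ) ∘ f for both γ ∈ Γ; i.e. the two systems are not topologically conjugate. -/
open Set

theorem interval_systems_not_conjugate :
    (Icc (0:ℝ) 1 = (fun x => 2 * x / 3) '' Icc (0:ℝ) 1 ∪
        (fun x => 2 * x / 3 + 1 / 3) '' Icc (0:ℝ) 1) ∧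
    (Icc (0:ℝ) 1 = (fun x => 3 * x / 4) '' Icc (0:ℝ) 1 ∪
        (fun x => 3 * x / 4 + 1 / 4) '' Icc (0:ℝ) 1) ∧
    ¬ ∃ f : ℝ → ℝ, ContinuousOn f (Icc (0:ℝ) 1) ∧
        Set.BijOn f (Icc (0:ℝ) 1) (Icc (0:ℝ) 1) ∧
        ((∀ x ∈ Icc (0:ℝ) 1,
            f (2 * x / 3) = 3 * f x / 4 ∧
            f (2 * x / 3 + 1 / 3) = 3 * f x / 4 + 1 / 4) ∨
         (∀ x ∈ Icc (0:ℝ) 1,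
            f (2 * x / 3) = 3 * f x / 4 + 1 / 4 ∧
            f (2 * x / 3 + 1 / 3) = 3 * f x / 4)) := by
  refine ⟨?_, ?_, ?_⟩
  · ext x
    simp only [mem_union, mem_image, mem_Icc]
    constructor
    · rintro ⟨hx0, hx1⟩
      by_cases h : x ≤ 2/3
      · exact Or.inl ⟨3*x/2, ⟨by linarith, by linarith⟩, by ring⟩
      · exact Or.inr ⟨(3*x-1)/2, ⟨by linarith, by linarith⟩, by ring⟩
    · rintro (⟨y, ⟨h0, h1⟩, rfl⟩ | ⟨y, ⟨h0, h1⟩, rfl⟩) <;> constructor <;> linarith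
  · ext x
    simp only [mem_union, mem_image, mem_Icc]
    constructor
    · rintro ⟨hx0, hx1⟩
      by_cases h : x ≤ 3/4
      · exact Or.inl ⟨4*x/3, ⟨by linarith, by linarith⟩, by ring⟩
      · exact Or.inr ⟨(4*x-1)/3, ⟨by linarith, by linarith⟩, by ring⟩
    · rintro (⟨y, ⟨h0, h1⟩, rfl⟩ | ⟨y, ⟨h0, h1⟩, rfl⟩) <;> constructor <;> linarith
  · rintro ⟨f, hcont, ⟨hmap, hinj, hsurj⟩, hcase | hcase⟩
    · -- orientation preserving case
      have e0 := hcase 0 (by norm_num)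
      have e1 := hcase 1 (by norm_num)
      norm_num at e0 e1
      have h0 : f 0 = 0 := by linarith [e0.1]
      have h1 : f 1 = 1 := by linarith [e1.2]
      have h23 : f (2/3) = 3/4 := by rw [e1.1, h1]; norm_num
      have h13 : f (1/3) = 1/4 := by
        have := e0.2
        rw [h0] at this; rw [this]; norm_num
      have e23 := hcase (2/3) (by norm_num)
      have e13 := hcase (1/3) (by norm_num)
      norm_num at e23 e13
      have h49 : f (4/9) = 9/16 := by
        have := e23.1
        norm_num [show (2:ℝ)*(2/3)/3 = 4/9 by norm_num] at this
        rw [this, h23]; norm_num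
      have h59 : f (5/9) = 7/16 := by
        have := e13.2
        norm_num [show (2:ℝ)*(1/3)/3 + 1/3 = 5/9 by norm_num] at this
        rw [this, h13]; norm_num
      have hsub : Icc (f 0) (f (4/9)) ⊆ f '' Icc 0 (4/9) :=
        intermediate_value_Icc (by norm_num)
          (hcont.mono (Icc_subset_Icc le_rfl (by norm_num)))
      obtain ⟨c, hc, hfc⟩ := hsub (by rw [h0, h49]; norm_num : (7:ℝ)/16 ∈ Icc (f 0) (f (4/9)))
      have hceq : c = 5/9 := hinj ⟨hc.1, hc.2.trans (by norm_num)⟩ (by norm_num)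
        (by rw [hfc, h59])
      rw [hceq] at hc
      have := hc.2
      norm_num at this
    · -- orientation reversing case
      have e0 := hcase 0 (by norm_num)
      have e1 := hcase 1 (by norm_num)
      norm_num at e0 e1
      have h0 : f 0 = 1 := by linarith [e0.1]
      have h1 : f 1 = 0 := by linarith [e1.2]
      have h23 : f (2/3) = 1/4 := by rw [e1.1, h1]; norm_num
      have h13 : f (1/3) = 3/4 := by
        have := e0.2
        rw [h0] at this; rw [this]; norm_num
      have e23 := hcase (2/3) (by norm_num)
      have e13 := hcase (1/3) (by norm_num)
      norm_num at e23 e13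
      have h49 : f (4/9) = 7/16 := by
        have := e23.1
        norm_num [show (2:ℝ)*(2/3)/3 = 4/9 by norm_num] at this
        rw [this, h23]; norm_num
      have h59 : f (5/9) = 9/16 := by
        have := e13.2
        norm_num [show (2:ℝ)*(1/3)/3 + 1/3 = 5/9 by norm_num] at this
        rw [this, h13]; norm_num
      have hsub : Icc (f 1) (f (5/9)) ⊆ f '' Icc (5/9) 1 :=
        intermediate_value_Icc' (by norm_num)
          (hcont.mono (Icc_subset_Icc (by norm_num) le_rfl))
      obtain ⟨c, hc, hfc⟩ := hsub (by rw [h1, h59]; norm_num : (7:ℝ)/16 ∈ Icc (f 1) (f (5/9)))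
      have hceq : c = 4/9 := hinj ⟨(by norm_num : (0:ℝ) ≤ 5/9).trans hc.1, hc.2⟩ (by norm_num)
        (by rw [hfc, h49])
      rw [hceq] at hc
      have := hc.1
      norm_num at this
end
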